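/- If G is a vertex-transitive graph, then the fractional vertex-arboricity of G equals |V(G)| divided by the size of a largest induced forest in G. -/

import Mathlib

open MeasureTheory

variable {V : Type*}

/-- `φ` is a fractional `k`-arborization of `G`: each vertex gets a measurable subset of
`(0, k)` of Lebesgue measure one, and every level set induces a forest. -/
def FracArb (G : SimpleGraph V) (k : ℝ) (φ : V → Set ℝ) : Prop :=
  (∀ v, MeasurableSet (φ v)) ∧ (∀ v, φ v ⊆ Set.Ioo 0 k) ∧ (∀ v, volume (φ v) = 1) ∧
    ∀ α : ℝ, (G.induce {v | α ∈ φ v}).IsAcyclic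

/-- `G` has a fractional `k`-arborization. -/
def HasFracArb (G : SimpleGraph V) (k : ℝ) : Prop := ∃ φ, FracArb G k φ

/-- The fractional vertex-arboricity of `G`. -/
noncomputable def fva (G : SimpleGraph V) : ℝ := sInf {k : ℝ | 0 < k ∧ HasFracArb G k}

/-- The vertex-arboricity of `G`: least `k` admitting a partition into `k` forests. -/
noncomputable def va (G : SimpleGraph V) : ℕ :=
  sInf {k : ℕ | ∃ c : V → Fin k, ∀ i, (G.induce {v | c v = i}).IsAcyclic}

/-- The maximum size of a set of vertices inducing a forest in `G`. -/
noncomputable def maxIndForest (G : SimpleGraph V) [Fintype V] : ℕ :=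
  sSup {n : ℕ | ∃ S : Finset V, (G.induce (S : Set V)).IsAcyclic ∧ S.card = n}

/-- `H` is a minor of `G` (branch-set formulation). -/
def IsMinor {α : Type*} {β : Type*} (H : SimpleGraph α) (G : SimpleGraph β) : Prop :=
  ∃ f : α → Set β, (∀ a, (f a).Nonempty) ∧ (∀ a, (G.induce (f a)).Connected) ∧
    (Pairwise fun a b => Disjoint (f a) (f b)) ∧
    ∀ a b, H.Adj a b → ∃ x ∈ f a, ∃ y ∈ f b, G.Adj x y

/-- Planarity, via Wagner's theorem: no `K₅` minor and no `K₃,₃` minor. -/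
def Planar (G : SimpleGraph V) : Prop :=
  ¬ IsMinor (SimpleGraph.completeGraph (Fin 5)) G ∧
    ¬ IsMinor (completeBipartiteGraph (Fin 3) (Fin 3)) G

/-- Number of neighbors of `v` of degree at least three. -/
def effDeg (G : SimpleGraph V) [Fintype V] [DecidableRel G.Adj] (v : V) : ℕ :=
  ((G.neighborFinset v).filter fun u => 3 ≤ G.degree u).card

/-- `v` is light: effective degree at most three and degree at most five. -/
def Light (G : SimpleGraph V) [Fintype V] [DecidableRel G.Adj] (v : V) : Prop :=
  effDeg G v ≤ 3 ∧ G.degree v ≤ 5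

/-- `G` is `k`-arborically critical. -/
def ArbCritical (G : SimpleGraph V) (k : ℚ) : Prop :=
  (k : ℝ) < fva G ∧ ∀ H : G.Subgraph, H ≠ ⊤ → fva H.coe ≤ (k : ℝ)

instance (G : SimpleGraph V) [Fintype V] [DecidableRel G.Adj] (v : V) :
    Decidable (Light G v) := inferInstanceAs (Decidable (_ ∧ _))

open ENNReal
open scoped Classical

lemma acyclic_of_subsingleton {W : Type*} [Subsingleton W] (H : SimpleGraph W) :
    H.IsAcyclic := by
  have : H = ⊥ := by
    ext a b
    cases Subsingleton.elim a b
    simp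
  exact this ▸ SimpleGraph.isAcyclic_bot

theorem iso_acyclic {A B : Type*} {H : SimpleGraph A} {K : SimpleGraph B} (e : H ≃g K)
    (h : H.IsAcyclic) : K.IsAcyclic := by
  intro v c hc
  exact h (c.map e.symm.toHom) (hc.map e.symm.injective)

noncomputable def induceImageIso {G : SimpleGraph V} (σ : G ≃g G) (S : Set V) :
    G.induce S ≃g G.induce (σ '' S) where
  toEquiv := σ.toEquiv.image S
  map_rel_iff' := by intro x y; exact σ.map_adj_iff

lemma exists_fracArb (G : SimpleGraph V) [Fintype V] [Nonempty V]
    (htrans : ∀ u v : V, ∃ g : G ≃g G, g u = v)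
    (S : Finset V) (hS : (G.induce (S : Set V)).IsAcyclic) (hSpos : 0 < S.card) :
    ∃ φ, FracArb G ((Fintype.card V : ℝ) / (S.card : ℝ)) φ := by
  classical
  haveI : Fintype (G ≃g G) :=
    Fintype.ofInjective (fun f : G ≃g G => f.toEquiv)
      (fun f g h => by cases f; cases g; simpa using h)
  haveI : Nonempty (G ≃g G) := ⟨SimpleGraph.Iso.refl⟩
  set m := Fintype.card (G ≃g G) with hm
  set n := Fintype.card V with hn
  have hmpos : 0 < m := Fintype.card_pos
  have hnpos : 0 < n := Fintype.card_pos
  set cnt : V → ℕ := fun v => (Finset.univ.filter fun σ : G ≃g G => v ∈ S.image ⇑σ).card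
    with hcnt
  have hconst : ∀ u v : V, cnt u = cnt v := by
    intro u v
    obtain ⟨g, hg⟩ := htrans u v
    refine Finset.card_bij' (fun σ _ => σ.trans g) (fun τ _ => τ.trans g.symm) ?_ ?_ ?_ ?_
    · intro σ hσ
      simp only [Finset.mem_filter, Finset.mem_univ, true_and, Finset.mem_image] at hσ ⊢
      obtain ⟨s, hs, hsu⟩ := hσ
      exact ⟨s, hs, by simp [hsu, hg]⟩
    · intro τ hτ
      simp only [Finset.mem_filter, Finset.mem_univ, true_and, Finset.mem_image] at hτ ⊢
      obtain ⟨s, hs, hsv⟩ := hτ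
      exact ⟨s, hs, by simp [hsv, ← hg]⟩
    · intro σ hσ
      ext x
      simp
    · intro τ hτ
      ext x
      simp
  set v0 : V := Classical.arbitrary V with hv0
  set t := cnt v0 with htdef
  have hdouble : m * S.card = n * t := by
    calc m * S.card = ∑ σ : G ≃g G, (S.image ⇑σ).card := by
          rw [Finset.sum_congr rfl fun σ _ =>
            (Finset.card_image_of_injective S σ.injective)]
          simp [hm, mul_comm]
    _ = ∑ σ : G ≃g G, (Finset.univ.filter fun v => v ∈ S.image ⇑σ).card := by
          refine Finset.sum_congr rfl fun σ _ => ?_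
          rw [Finset.filter_univ_mem]
    _ = ∑ σ : G ≃g G, ∑ v : V, if v ∈ S.image ⇑σ then 1 else 0 :=
          Finset.sum_congr rfl fun σ _ => Finset.card_filter _ _
    _ = ∑ v : V, ∑ σ : G ≃g G, if v ∈ S.image ⇑σ then 1 else 0 := Finset.sum_comm
    _ = ∑ v : V, cnt v :=
          Finset.sum_congr rfl fun v _ => (Finset.card_filter _ _).symm
    _ = n * t := by
          rw [Finset.sum_congr rfl fun v _ => hconst v v0]
          simp [hn, mul_comm]
          rfl
  have htpos : 0 < t := by
    rcases Nat.eq_zero_or_pos t with h0 | h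
    · exfalso
      rw [h0, mul_zero] at hdouble
      exact (Nat.mul_pos hmpos hSpos).ne' hdouble
    · exact h
  set e : Fin m ≃ (G ≃g G) := (Fintype.equivFin (G ≃g G)).symm with he
  set c : ℝ := 1 / t with hcdef
  have ht0' : (0:ℝ) < (t:ℝ) := by exact_mod_cast htpos
  have hc : 0 < c := by rw [hcdef]; exact div_pos one_pos ht0'
  set J : V → Finset (Fin m) := fun v =>
    (Finset.univ.filter fun σ : G ≃g G => v ∈ S.image ⇑σ).map e.symm.toEmbedding with hJ
  have hJmem : ∀ (v : V) (i : Fin m), i ∈ J v ↔ v ∈ S.image ⇑(e i) := by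
    intro v i
    simp [hJ, Finset.mem_map_equiv]
  have hJcard : ∀ v, (J v).card = t := by
    intro v
    rw [hJ]
    simp only [Finset.card_map]
    exact hconst v v0
  set I : Fin m → Set ℝ := fun i => Set.Ioo ((i : ℕ) * c) ((i : ℕ) * c + c) with hI
  have hdisj : ∀ i j : Fin m, i ≠ j → Disjoint (I i) (I j) := by
    have key : ∀ i j : ℕ, i < j →
        Disjoint (Set.Ioo ((i:ℝ)*c) ((i:ℝ)*c+c)) (Set.Ioo ((j:ℝ)*c) ((j:ℝ)*c+c)) := by
      intro i j hij
      rw [Set.disjoint_left]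
      rintro x ⟨hx1, hx2⟩ ⟨hx3, hx4⟩
      have : (i:ℝ) + 1 ≤ j := by exact_mod_cast hij
      nlinarith
    intro i j hij
    rcases lt_or_gt_of_ne (fun h : (i:ℕ) = (j:ℕ) => hij (Fin.ext h)) with h | h
    · exact key _ _ h
    · exact (key _ _ h).symm
  set φ : V → Set ℝ := fun v => ⋃ i ∈ J v, I i with hφ
  have hmc : (m : ℝ) * c = (n : ℝ) / (S.card : ℝ) := by
    have h' : (m:ℝ) * (S.card:ℝ) = (n:ℝ) * (t:ℝ) := by exact_mod_cast hdouble
    rw [hcdef]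
    have ht0 : (t:ℝ) ≠ 0 := ht0'.ne'
    have hS0 : ((S.card:ℕ):ℝ) ≠ 0 := by
      exact_mod_cast hSpos.ne'
    field_simp
    linarith [h']
  refine ⟨φ, ?_, ?_, ?_, ?_⟩
  · intro v
    exact (J v).measurableSet_biUnion (fun i _ => measurableSet_Ioo)
  · intro v x hx
    simp only [hφ, Set.mem_iUnion, exists_prop] at hx
    obtain ⟨i, hi, hx1, hx2⟩ := hx
    constructor
    · have : (0:ℝ) ≤ ((i:ℕ):ℝ) * c := mul_nonneg (Nat.cast_nonneg _) hc.le
      linarith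
    · have h1 : ((i:ℕ):ℝ) + 1 ≤ (m:ℝ) := by exact_mod_cast i.isLt
      calc x < ((i:ℕ):ℝ)*c + c := hx2
        _ = (((i:ℕ):ℝ) + 1) * c := by ring
        _ ≤ (m:ℝ) * c := by nlinarith
        _ = (n:ℝ)/(S.card:ℝ) := hmc
  · intro v
    rw [hφ]
    rw [measure_biUnion_finset (fun i _ j _ hij => hdisj i j hij)
      (fun i _ => measurableSet_Ioo)]
    have hvol : ∀ i ∈ J v, volume (I i) = ENNReal.ofReal c := by
      intro i _
      rw [hI]
      simp [Real.volume_Ioo]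
    rw [Finset.sum_congr rfl hvol, Finset.sum_const, hJcard v, nsmul_eq_mul,
      ← ENNReal.ofReal_natCast, ← ENNReal.ofReal_mul ht0'.le, hcdef,
      mul_one_div, div_self ht0'.ne']
    simp
  · intro α
    by_cases hα : ∃ i : Fin m, α ∈ I i
    · obtain ⟨i, hi⟩ := hα
      have hset : {v | α ∈ φ v} = ⇑(e i) '' (S : Set V) := by
        ext v
        simp only [Set.mem_setOf_eq, hφ, Set.mem_iUnion, exists_prop]
        constructor
        · rintro ⟨j, hj, hαj⟩
          have hji : j = i := by
            by_contra hne
            exact (hdisj j i hne).le_bot ⟨hαj, hi⟩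
          subst hji
          obtain ⟨s, hs, rfl⟩ := Finset.mem_image.mp ((hJmem v j).mp hj)
          exact ⟨s, hs, rfl⟩
        · rintro ⟨s, hs, rfl⟩
          exact ⟨i, (hJmem _ i).mpr (Finset.mem_image.mpr ⟨s, hs, rfl⟩), hi⟩
      rw [hset]
      exact iso_acyclic (induceImageIso (e i) (S : Set V)) hS
    · have hset : {v | α ∈ φ v} = (∅ : Set V) := by
        ext v
        simp only [Set.mem_setOf_eq, hφ, Set.mem_iUnion, exists_prop,
          Set.mem_empty_iff_false, iff_false]
        rintro ⟨j, hj, hαj⟩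
        exact hα ⟨j, hαj⟩
      rw [hset]
      exact acyclic_of_subsingleton _

lemma mif_bdd (G : SimpleGraph V) [Fintype V] :
    BddAbove {n : ℕ | ∃ S : Finset V, (G.induce (S : Set V)).IsAcyclic ∧ S.card = n} := by
  refine ⟨Fintype.card V, fun n hn => ?_⟩
  obtain ⟨S, -, rfl⟩ := hn
  exact S.card_le_univ

lemma card_le_mif (G : SimpleGraph V) [Fintype V] (S : Finset V)
    (hS : (G.induce (S : Set V)).IsAcyclic) : S.card ≤ maxIndForest G :=
  le_csSup (mif_bdd G) ⟨S, hS, rfl⟩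

lemma mif_spec (G : SimpleGraph V) [Fintype V] :
    ∃ S : Finset V, (G.induce (S : Set V)).IsAcyclic ∧ S.card = maxIndForest G := by
  have h0 : (0 : ℕ) ∈ {n : ℕ | ∃ S : Finset V, (G.induce (S : Set V)).IsAcyclic ∧ S.card = n} := by
    refine ⟨∅, ?_, by simp⟩
    haveI : IsEmpty ((∅ : Finset V) : Set V) := by simp
    exact acyclic_of_subsingleton _
  exact Nat.sSup_mem ⟨0, h0⟩ (mif_bdd G)

lemma mif_pos (G : SimpleGraph V) [Fintype V] [Nonempty V] : 0 < maxIndForest G := by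
  obtain ⟨v⟩ := ‹Nonempty V›
  have h : (G.induce (({v} : Finset V) : Set V)).IsAcyclic := by
    haveI : Subsingleton (({v} : Finset V) : Set V) := by
      constructor; rintro ⟨a, ha⟩ ⟨b, hb⟩
      simp only [Finset.coe_singleton, Set.mem_singleton_iff] at ha hb
      subst ha; subst hb; rfl
    exact acyclic_of_subsingleton _
  have := card_le_mif G {v} h
  exact lt_of_lt_of_le (by simp) this
lemma lower_bound (G : SimpleGraph V) [Fintype V] {k : ℝ} {φ : V → Set ℝ} {a : ℕ}
    (hk : 0 < k)
    (hbd : ∀ α : ℝ, (Finset.univ.filter fun v => α ∈ φ v).card ≤ a)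
    (h : FracArb G k φ) : (Fintype.card V : ℝ) ≤ a * k := by
  classical
  obtain ⟨hmeas, hsub, hvol, -⟩ := h
  have key : (Fintype.card V : ℝ≥0∞) ≤ (a : ℝ≥0∞) * ENNReal.ofReal k := by
    calc (Fintype.card V : ℝ≥0∞) = ∑ v : V, volume (φ v) := by simp [hvol]
    _ = ∑ v : V, ∫⁻ α, (φ v).indicator (fun _ => (1 : ℝ≥0∞)) α := by
        refine Finset.sum_congr rfl fun v _ => ?_
        rw [lintegral_indicator (hmeas v) _]
        simp
    _ = ∫⁻ α, ∑ v : V, (φ v).indicator (fun _ => (1 : ℝ≥0∞)) α := by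
        rw [lintegral_finset_sum]
        intro v _
        exact (measurable_const.indicator (hmeas v))
    _ ≤ ∫⁻ α, (Set.Ioo (0:ℝ) k).indicator (fun _ => (a : ℝ≥0∞)) α := by
        refine lintegral_mono fun α => ?_
        by_cases hα : α ∈ Set.Ioo (0:ℝ) k
        · have : ∑ v : V, (φ v).indicator (fun _ => (1 : ℝ≥0∞)) α
              = ((Finset.univ.filter fun v => α ∈ φ v).card : ℝ≥0∞) := by
            simp [Set.indicator_apply]
          rw [this, Set.indicator_of_mem hα]
          exact Nat.cast_le.mpr (hbd α)
        · have : ∀ v : V, (φ v).indicator (fun _ => (1 : ℝ≥0∞)) α = 0 := by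
            intro v
            exact Set.indicator_of_notMem (fun hm => hα (hsub v hm)) _
          simp [this, Set.indicator_apply]
    _ = (a : ℝ≥0∞) * volume (Set.Ioo (0:ℝ) k) := by
        rw [lintegral_indicator measurableSet_Ioo _]
        simp [mul_comm]
    _ = (a : ℝ≥0∞) * ENNReal.ofReal k := by simp [Real.volume_Ioo]
  have h2 : ENNReal.ofReal (Fintype.card V : ℝ) ≤ ENNReal.ofReal ((a : ℝ) * k) := by
    rw [ENNReal.ofReal_mul (by positivity)]
    simpa [ENNReal.ofReal_natCast] using key
  have := (ENNReal.ofReal_le_ofReal_iff (by positivity)).mp h2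
  exact this

/-- If `G` is vertex-transitive then `fva(G) = |V(G)| / a(G)`. -/
theorem stmt3 (G : SimpleGraph V) [Fintype V]
    (htrans : ∀ u v : V, ∃ g : G ≃g G, g u = v) :
    fva G = (Fintype.card V : ℝ) / (maxIndForest G : ℝ) := by
  classical
  rcases isEmpty_or_nonempty V with hV | hV
  · have hset : {k : ℝ | 0 < k ∧ HasFracArb G k} = Set.Ioi 0 := by
      ext k
      simp only [Set.mem_setOf_eq, Set.mem_Ioi, and_iff_left_iff_imp]
      intro hk
      exact ⟨fun v => isEmptyElim v, fun v => isEmptyElim v, fun v => isEmptyElim v,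
        fun v => isEmptyElim v, fun α => acyclic_of_subsingleton _⟩
    rw [fva, hset, csInf_Ioi]
    simp
  · have ha : 0 < maxIndForest G := mif_pos G
    obtain ⟨S, hS, hScard⟩ := mif_spec G
    obtain ⟨φ, hφ⟩ := exists_fracArb G htrans S hS (hScard ▸ ha)
    set n := Fintype.card V with hn
    set a := maxIndForest G with hadef
    have hnpos : 0 < n := Fintype.card_pos
    have hr : (0:ℝ) < (n:ℝ) / (a:ℝ) := by
      apply div_pos <;> exact_mod_cast (by assumption)
    have hmem : (n:ℝ) / (a:ℝ) ∈ {k : ℝ | 0 < k ∧ HasFracArb G k} := by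
      refine ⟨hr, φ, ?_⟩
      have hca : (a:ℝ) = (S.card:ℝ) := by exact_mod_cast hScard.symm
      rw [hca]
      exact hφ
    have hlb : ∀ k ∈ {k : ℝ | 0 < k ∧ HasFracArb G k}, (n:ℝ) / (a:ℝ) ≤ k := by
      rintro k ⟨hk, φ', hφ'⟩
      have hbd : ∀ α : ℝ, (Finset.univ.filter fun v => α ∈ φ' v).card ≤ a := by
        intro α
        have hcoe : ((Finset.univ.filter fun v => α ∈ φ' v : Finset V) : Set V)
            = {v | α ∈ φ' v} := by
          ext v; simp
        refine card_le_mif G _ ?_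
        rw [hcoe]
        exact hφ'.2.2.2 α
      have hle := lower_bound G hk hbd hφ'
      rw [div_le_iff₀ (by exact_mod_cast ha)]
      calc (n:ℝ) ≤ (a:ℝ) * k := hle
        _ = k * (a:ℝ) := mul_comm _ _
    exact le_antisymm (csInf_le ⟨(n:ℝ)/(a:ℝ), hlb⟩ hmem) (le_csInf ⟨_, hmem⟩ hlb)
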